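/- arXiv:1712.04017 — 2 statements merged into one kernel-verified Lean document; each statement's English description precedes it below -/
import Mathlib

section
/- For every ξ ∈ ℝⁿ, the linear operator Q₁(ξ) on the complex vector space of symmetric (n+1)×(n+1) complex matrices (H_{ab})_{0 ≤ a,b ≤ n}, defined by (Q₁(ξ)H)_{jk} = -2√(-1)(ξ_j H_{0k} + ξ_k H_{0j}) for 1 ≤ j,k ≤ n, (Q₁(ξ)H)_{j0} = -2√(-1)(ξ_j H_{00} - ξ_i H_{ij}) for 1 ≤ j ≤ n (summing i from 1 to n), and (Q₁(ξ)H)_{00} = 4√(-1) ξ_i H_{0i} (summing i from 1 to n), is diagonalizable with all eigenvalues real. -/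
set_option maxHeartbeats 1000000


/-!
Statement 6 (the Lemma in §3.3 of the paper): the operator `Q₁(ξ)` on the
complex vector space of symmetric `(n+1)×(n+1)` complex matrices is
diagonalizable with real eigenvalues.  We express this by the existence of a
linearly independent family of symmetric eigenvectors with *real* eigenvalues
spanning all symmetric matrices.  The index `0` is the `t`-index and the
spatial index `i ∈ {1,…,n}` is represented by `i.succ : Fin (n+1)`.
-/

noncomputable section

/-- The operator `Q₁(ξ)` on matrices, given entrywise:
`(Q₁(ξ)H)_{jk} = -2i(ξ_j H_{0k} + ξ_k H_{0j})`,
`(Q₁(ξ)H)_{j0} = -2i(ξ_j H_{00} - ξ_i H_{ij})`,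
`(Q₁(ξ)H)_{00} = 4i ξ_i H_{0i}`. -/
def Q1 (n : ℕ) (ξ : EuclideanSpace ℝ (Fin n))
    (A : Matrix (Fin (n + 1)) (Fin (n + 1)) ℂ) :
    Matrix (Fin (n + 1)) (Fin (n + 1)) ℂ :=
  Matrix.of fun a b =>
    Fin.cases
      (Fin.cases (4 * Complex.I * ∑ i : Fin n, (ξ i : ℂ) * A 0 i.succ)
        (fun j => -2 * Complex.I *
          ((ξ j : ℂ) * A 0 0 - ∑ i : Fin n, (ξ i : ℂ) * A i.succ j.succ)) b)
      (fun j =>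
        Fin.cases (-2 * Complex.I *
            ((ξ j : ℂ) * A 0 0 - ∑ i : Fin n, (ξ i : ℂ) * A i.succ j.succ))
          (fun k => -2 * Complex.I *
            ((ξ j : ℂ) * A 0 k.succ + (ξ k : ℂ) * A 0 j.succ)) b) a

namespace S6

variable (n : ℕ) (ξ : EuclideanSpace ℝ (Fin n))

abbrev E (n : ℕ) := EuclideanSpace ℂ (Fin (n+1) × Fin (n+1))

def toMat : E n →ₗ[ℂ] Matrix (Fin (n+1)) (Fin (n+1)) ℂ where
  toFun f := Matrix.of fun a b => f (a, b)
  map_add' f g := rfl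
  map_smul' c f := rfl

lemma toMat_apply (f : E n) (a b : Fin (n+1)) : toMat n f a b = f (a, b) := rfl

def L : E n →ₗ[ℂ] E n where
  toFun f := WithLp.toLp 2 (fun p => Q1 n ξ (toMat n f) p.1 p.2)
  map_add' f g := by
    ext p
    obtain ⟨a, b⟩ := p
    show Q1 n ξ (toMat n (f+g)) a b = Q1 n ξ (toMat n f) a b + Q1 n ξ (toMat n g) a b
    induction a using Fin.cases <;> induction b using Fin.cases <;>
      simp [Q1, toMat, Finset.sum_add_distrib, Finset.mul_sum, Finset.sum_mul, mul_add, mul_sub, PiLp.add_apply, mul_comm, mul_left_comm, mul_assoc] <;> ring_nf <;>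
      (repeat' first | rfl | exact Finset.sum_congr rfl fun x _ => by ring | congr 1)
  map_smul' c f := by
    ext p
    obtain ⟨a, b⟩ := p
    show Q1 n ξ (toMat n (c • f)) a b = c * Q1 n ξ (toMat n f) a b
    induction a using Fin.cases <;> induction b using Fin.cases <;>
      simp [Q1, toMat, Finset.mul_sum, smul_eq_mul, mul_sub, mul_add, mul_left_comm c] <;> ring_nf


def W : Submodule ℂ (E n) where
  carrier := {f | ∀ a b, f (a, b) = f (b, a)}
  add_mem' hf hg a b := by simp [PiLp.add_apply, hf a b, hg a b]
  zero_mem' a b := rfl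
  smul_mem' c f hf a b := by simp [PiLp.smul_apply, hf a b]

lemma L_mem (f : E n) : L n ξ f ∈ W n := by
  intro a b
  show Q1 n ξ (toMat n f) a b = Q1 n ξ (toMat n f) b a
  induction a using Fin.cases <;> induction b using Fin.cases <;>
    simp [Q1, toMat] <;> ring

def T : W n →ₗ[ℂ] W n := (L n ξ).restrict (fun f _ => L_mem n ξ f)

variable (n : ℕ) (ξ : EuclideanSpace ℝ (Fin n))

set_option maxHeartbeats 1000000 in
lemma key (f g : E n) (hf : ∀ a b, f (a, b) = f (b, a)) (hg : ∀ a b, g (a, b) = g (b, a)) :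
    ∑ p : Fin (n+1) × Fin (n+1), (starRingEnd ℂ) ((L n ξ f) p) * g p
      = ∑ p : Fin (n+1) × Fin (n+1), (starRingEnd ℂ) (f p) * (L n ξ g) p := by
  simp only [Fintype.sum_prod_type, Fin.sum_univ_succ, L, LinearMap.coe_mk, AddHom.coe_mk,
    toMat_apply, Q1, Matrix.of_apply, PiLp.toLp_apply, Fin.cases_zero, Fin.cases_succ, map_mul, map_sum, map_sub,
    map_add, map_neg, map_ofNat, Complex.conj_I, Complex.conj_ofReal, neg_mul, mul_neg,
    sub_mul, add_mul, mul_sub, mul_add, Finset.sum_mul, Finset.mul_sum,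
    Finset.sum_sub_distrib, Finset.sum_add_distrib, Finset.sum_neg_distrib, neg_neg,
    neg_sub, neg_add_rev]
  set C := starRingEnd ℂ with hC
  set P1 := ∑ i : Fin n, (↑(ξ i) : ℂ) * C (f (0, i.succ)) * g (0, 0) with hP1
  set P2 := ∑ i : Fin n, (↑(ξ i) : ℂ) * C (f (0, 0)) * g (0, i.succ) with hP2
  set P3 := ∑ x : Fin n, ∑ i : Fin n, (↑(ξ i) : ℂ) * C (f (i.succ, x.succ)) * g (0, x.succ) with hP3
  set P4 := ∑ x : Fin n, ∑ i : Fin n, (↑(ξ i) : ℂ) * C (f (0, x.succ)) * g (i.succ, x.succ) with hP4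
  have l1 : ∑ i : Fin n, 4 * Complex.I * ((↑(ξ i) : ℂ) * C (f (0, i.succ))) * g (0, 0)
      = 4 * Complex.I * P1 := by
    rw [hP1, Finset.mul_sum]; exact Finset.sum_congr rfl fun x _ => by ring
  have l2 : ∑ x : Fin n, 2 * Complex.I * ((↑(ξ x) : ℂ) * C (f (0, 0))) * g (x.succ, 0)
      = 2 * Complex.I * P2 := by
    rw [hP2, Finset.mul_sum]; exact Finset.sum_congr rfl fun x _ => by rw [hg]; ring
  have l3 : ∑ x : Fin n, ∑ i : Fin n, 2 * Complex.I * ((↑(ξ i) : ℂ) * C (f (i.succ, x.succ))) * g (x.succ, 0)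
      = 2 * Complex.I * P3 := by
    rw [hP3, Finset.mul_sum]
    exact Finset.sum_congr rfl fun x _ => by
      rw [Finset.mul_sum]; exact Finset.sum_congr rfl fun i _ => by rw [hg x.succ 0]; ring
  have l4 : ∑ x : Fin n, 2 * Complex.I * ((↑(ξ x) : ℂ) * C (f (0, 0))) * g (0, x.succ)
      = 2 * Complex.I * P2 := by
    rw [hP2, Finset.mul_sum]; exact Finset.sum_congr rfl fun x _ => by ring
  have l5 : ∑ x : Fin n, ∑ i : Fin n, 2 * Complex.I * ((↑(ξ i) : ℂ) * C (f (i.succ, x.succ))) * g (0, x.succ)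
      = 2 * Complex.I * P3 := by
    rw [hP3, Finset.mul_sum]
    exact Finset.sum_congr rfl fun x _ => by
      rw [Finset.mul_sum]; exact Finset.sum_congr rfl fun i _ => by ring
  have l6 : ∑ x : Fin n, ∑ x_1 : Fin n, 2 * Complex.I * ((↑(ξ x) : ℂ) * C (f (0, x_1.succ))) * g (x.succ, x_1.succ)
      = 2 * Complex.I * P4 := by
    rw [Finset.sum_comm, hP4, Finset.mul_sum]
    exact Finset.sum_congr rfl fun x _ => by
      rw [Finset.mul_sum]; exact Finset.sum_congr rfl fun i _ => by ring
  have l7 : ∑ x : Fin n, ∑ x_1 : Fin n, 2 * Complex.I * ((↑(ξ x_1) : ℂ) * C (f (0, x.succ))) * g (x.succ, x_1.succ)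
      = 2 * Complex.I * P4 := by
    rw [hP4, Finset.mul_sum]
    exact Finset.sum_congr rfl fun x _ => by
      rw [Finset.mul_sum]; exact Finset.sum_congr rfl fun i _ => by rw [hg x.succ i.succ]; ring
  have r1 : ∑ i : Fin n, C (f (0, 0)) * (4 * Complex.I * ((↑(ξ i) : ℂ) * g (0, i.succ)))
      = 4 * Complex.I * P2 := by
    rw [hP2, Finset.mul_sum]; exact Finset.sum_congr rfl fun x _ => by ring
  have r2 : ∑ x : Fin n, C (f (x.succ, 0)) * (2 * Complex.I * ((↑(ξ x) : ℂ) * g (0, 0)))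
      = 2 * Complex.I * P1 := by
    rw [hP1, Finset.mul_sum]; exact Finset.sum_congr rfl fun x _ => by rw [hf x.succ 0]; ring
  have r3 : ∑ x : Fin n, ∑ i : Fin n, C (f (x.succ, 0)) * (2 * Complex.I * ((↑(ξ i) : ℂ) * g (i.succ, x.succ)))
      = 2 * Complex.I * P4 := by
    rw [hP4, Finset.mul_sum]
    exact Finset.sum_congr rfl fun x _ => by
      rw [Finset.mul_sum]; exact Finset.sum_congr rfl fun i _ => by rw [hf x.succ 0]; ring
  have r4 : ∑ x : Fin n, C (f (0, x.succ)) * (2 * Complex.I * ((↑(ξ x) : ℂ) * g (0, 0)))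
      = 2 * Complex.I * P1 := by
    rw [hP1, Finset.mul_sum]; exact Finset.sum_congr rfl fun x _ => by ring
  have r5 : ∑ x : Fin n, ∑ i : Fin n, C (f (0, x.succ)) * (2 * Complex.I * ((↑(ξ i) : ℂ) * g (i.succ, x.succ)))
      = 2 * Complex.I * P4 := by
    rw [hP4, Finset.mul_sum]
    exact Finset.sum_congr rfl fun x _ => by
      rw [Finset.mul_sum]; exact Finset.sum_congr rfl fun i _ => by ring
  have r6 : ∑ x : Fin n, ∑ x_1 : Fin n, C (f (x.succ, x_1.succ)) * (2 * Complex.I * ((↑(ξ x) : ℂ) * g (0, x_1.succ)))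
      = 2 * Complex.I * P3 := by
    rw [Finset.sum_comm, hP3, Finset.mul_sum]
    exact Finset.sum_congr rfl fun x _ => by
      rw [Finset.mul_sum]; exact Finset.sum_congr rfl fun i _ => by ring
  have r7 : ∑ x : Fin n, ∑ x_1 : Fin n, C (f (x.succ, x_1.succ)) * (2 * Complex.I * ((↑(ξ x_1) : ℂ) * g (0, x.succ)))
      = 2 * Complex.I * P3 := by
    rw [hP3, Finset.mul_sum]
    exact Finset.sum_congr rfl fun x _ => by
      rw [Finset.mul_sum]; exact Finset.sum_congr rfl fun i _ => by rw [hf x.succ i.succ]; ring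
  rw [l1, l2, l3, l4, l5, l6, l7, r1, r2, r3, r4, r5, r6, r7]
  ring

variable (n : ℕ) (ξ : EuclideanSpace ℝ (Fin n))

noncomputable instance iN : NormedAddCommGroup ↥(W n) := Submodule.normedAddCommGroup _
noncomputable instance iI : InnerProductSpace ℂ ↥(W n) := Submodule.innerProductSpace _

lemma mem_W_iff (f : E n) : f ∈ W n ↔ ∀ a b, f (a, b) = f (b, a) := Iff.rfl

lemma isSymm_T : (T n ξ).IsSymmetric := by
  intro x y
  simp only [T, Submodule.coe_inner, LinearMap.restrict_coe_apply, PiLp.inner_apply,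
    RCLike.inner_apply']
  exact key n ξ x y x.2 y.2

noncomputable def Wequiv : W n ≃ₗ[ℂ] ({p : Fin (n+1) × Fin (n+1) // p.1 ≤ p.2} → ℂ) where
  toFun f q := (f : E n) q.val
  map_add' f g := rfl
  map_smul' c f := rfl
  invFun g := ⟨WithLp.toLp 2 (fun p => if h : p.1 ≤ p.2 then g ⟨p, h⟩ else g ⟨(p.2, p.1), le_of_not_ge h⟩), by
    intro a b
    dsimp only
    rcases le_or_gt a b with h | h
    · rw [dif_pos h]
      by_cases h' : b ≤ a
      · have : a = b := le_antisymm h h'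
        subst this
        rw [dif_pos le_rfl]
      · rw [dif_neg h']
    · rw [dif_neg (not_le.mpr h), dif_pos h.le]⟩
  left_inv f := by
    apply Subtype.ext
    ext p
    obtain ⟨a, b⟩ := p
    dsimp only
    split_ifs with h
    · rfl
    · exact f.2 b a
  right_inv g := by
    funext q
    obtain ⟨⟨a, b⟩, h⟩ := q
    dsimp only
    rw [dif_pos h]

lemma card_sigma : Fintype.card {p : Fin (n+1) × Fin (n+1) // p.1 ≤ p.2}
    = (n + 1) * (n + 2) / 2 := by
  have e : {p : Fin (n+1) × Fin (n+1) // p.1 ≤ p.2}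
      ≃ Σ a : Fin (n+1), {b : Fin (n+1) // a ≤ b} :=
    Equiv.subtypeProdEquivSigmaSubtype _
  rw [Fintype.card_congr e, Fintype.card_sigma]
  have h1 : ∀ a : Fin (n+1), Fintype.card {b : Fin (n+1) // a ≤ b} = n + 1 - a.val := by
    intro a
    rw [Fintype.card_congr (Equiv.subtypeEquivRight (fun x => Iff.rfl) :
      {b : Fin (n+1) // a ≤ b} ≃ {b : Fin (n+1) // b ∈ Set.Ici a})]
    rw [Fintype.card_Ici, Fin.card_Ici]
  simp only [h1]
  rw [Fin.sum_univ_eq_sum_range (fun i => n + 1 - i) (n + 1)]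
  have h2 : ∑ i ∈ Finset.range (n+1), (n + 1 - i) = ∑ i ∈ Finset.range (n+1), (i + 1) := by
    rw [← Finset.sum_range_reflect (fun i => i + 1) (n+1)]
    exact Finset.sum_congr rfl fun i hi => by
      have := Finset.mem_range.mp hi; omega
  rw [h2]
  have h3 : (∑ i ∈ Finset.range (n+2), i) = ∑ i ∈ Finset.range (n+1), (i + 1) := by
    rw [Finset.sum_range_succ' (fun i => i) (n+1), add_zero]
  have h4 := Finset.sum_range_id_mul_two (n+2)
  have h5 : (n + 2) * (n + 2 - 1) = (n + 1) * (n + 2) := by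
    have h6 : n + 2 - 1 = n + 1 := by omega
    rw [h6]; ring
  rw [h5] at h4
  omega

lemma finrank_W : Module.finrank ℂ (W n) = (n + 1) * (n + 2) / 2 := by
  rw [(Wequiv n).finrank_eq, Module.finrank_fintype_fun_eq_card, card_sigma]

end S6

open S6

/-- `Q₁(ξ)` is diagonalizable with real eigenvalues on the
space of symmetric matrices: there is a linearly independent family of
symmetric matrices, spanning all symmetric matrices, each of which is an
eigenvector of `Q₁(ξ)` with a real eigenvalue. -/
theorem statement6 (n : ℕ) (hn : 3 ≤ n) (ξ : EuclideanSpace ℝ (Fin n)) :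
    ∃ (v : Fin ((n + 1) * (n + 2) / 2) → Matrix (Fin (n + 1)) (Fin (n + 1)) ℂ)
      (μ : Fin ((n + 1) * (n + 2) / 2) → ℝ),
      (∀ m, (v m).IsSymm) ∧
      (∀ m, Q1 n ξ (v m) = (μ m : ℂ) • v m) ∧
      LinearIndependent ℂ v ∧
      (∀ A : Matrix (Fin (n + 1)) (Fin (n + 1)) ℂ, A.IsSymm →
        A ∈ Submodule.span ℂ (Set.range v)) := by
  classical
  have hT := isSymm_T n ξ
  have hdim := finrank_W n
  let b := hT.eigenvectorBasis hdim
  let μ := hT.eigenvalues hdim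
  let φ : ↥(W n) →ₗ[ℂ] Matrix (Fin (n+1)) (Fin (n+1)) ℂ := (toMat n).comp (W n).subtype
  have hφinj : Function.Injective φ := by
    intro x y h
    apply Subtype.ext
    ext p
    exact congrFun (congrFun h p.1) p.2
  refine ⟨fun m => φ (b m), μ, ?_, ?_, ?_, ?_⟩
  · intro m
    apply Matrix.ext
    intro a c
    rw [Matrix.transpose_apply]
    exact (b m).2 c a
  · intro m
    have h := hT.apply_eigenvectorBasis hdim m
    have h' : L n ξ ((b m : ↥(W n)) : E n) = (μ m : ℂ) • ((b m : ↥(W n)) : E n) := by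
      exact congrArg Subtype.val h
    have : Q1 n ξ (φ (b m)) = toMat n (L n ξ ((b m : ↥(W n)) : E n)) := rfl
    rw [this, h', map_smul]
    rfl
  · have li := b.toBasis.linearIndependent
    rw [OrthonormalBasis.coe_toBasis] at li
    exact li.map' φ (LinearMap.ker_eq_bot.mpr hφinj)
  · intro A hA
    have hfW : (WithLp.toLp 2 (fun p => A p.1 p.2) : E n) ∈ W n := by
      intro a c
      exact congrFun (congrFun hA c) a
    have hmem : (⟨WithLp.toLp 2 (fun p => A p.1 p.2), hfW⟩ : ↥(W n)) ∈
        Submodule.span ℂ (Set.range ⇑b.toBasis) := by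
      rw [b.toBasis.span_eq]; trivial
    have h2 := Submodule.mem_map_of_mem (f := φ) hmem
    rw [Submodule.map_span] at h2
    have hAeq : A = φ (⟨WithLp.toLp 2 (fun p => A p.1 p.2), hfW⟩ : ↥(W n)) := rfl
    have hrange : ⇑φ '' Set.range ⇑b.toBasis = Set.range (fun m => φ (b m)) := by
      rw [OrthonormalBasis.coe_toBasis, ← Set.range_comp]
      rfl
    rw [hrange] at h2
    rw [hAeq]
    exact h2

end
end

section
/- Let n ≥ 1 be an integer. Suppose g : [0,∞) → ℝ is continuous with ∫₀^∞ |g(s)| e^{-s} ds < ∞, and suppose f : [0,∞) → ℝ is a twice differentiable solution of f''(t) + n f'(t) - (n+1) f(t) = g(t) for t ≥ 0, such that f(t) → 0 as t → ∞ and f' is bounded on [0,∞). Then f'(0) + (n+1) f(0) = 0 if and only if ∫₀^∞ g(s) e^{-s} ds = 0. -/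
/-!
Statement 14 (Lemma 3.14 / `lem:ODEintegral` of the paper): for a decaying
solution of `f'' + n f' - (n+1) f = g` on `[0,∞)`, the boundary condition
`f'(0) + (n+1) f(0) = 0` holds iff `∫₀^∞ g(s) e^{-s} ds = 0`.
-/

open MeasureTheory

theorem statement14 (n : ℕ) (hn : 1 ≤ n) (g f f' f'' : ℝ → ℝ)
    (hg : ContinuousOn g (Set.Ici (0 : ℝ)))
    (hgint : IntegrableOn (fun s => |g s| * Real.exp (-s)) (Set.Ici (0 : ℝ)))
    (hf' : ∀ t ∈ Set.Ici (0 : ℝ), HasDerivAt f (f' t) t)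
    (hf'' : ∀ t ∈ Set.Ici (0 : ℝ), HasDerivAt f' (f'' t) t)
    (hode : ∀ t ∈ Set.Ici (0 : ℝ), f'' t + n * f' t - (n + 1) * f t = g t)
    (hlim : Filter.Tendsto f Filter.atTop (nhds 0))
    (hbdd : ∃ M : ℝ, ∀ t ∈ Set.Ici (0 : ℝ), |f' t| ≤ M) :
    f' 0 + (n + 1) * f 0 = 0 ↔ (∫ s in Set.Ici (0 : ℝ), g s * Real.exp (-s)) = 0 := by
  obtain ⟨M, hM⟩ := hbdd
  set h : ℝ → ℝ := fun t => Real.exp (-t) * (f' t + (n + 1) * f t) with hh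
  -- derivative of h
  have hderiv : ∀ t ∈ Set.Ici (0 : ℝ), HasDerivAt h (g t * Real.exp (-t)) t := by
    intro t ht
    have h1 : HasDerivAt (fun t : ℝ => Real.exp (-t)) (-Real.exp (-t)) t := by
      simpa [Function.comp_def] using (Real.hasDerivAt_exp (-t)).comp t (hasDerivAt_neg t)
    have h2 : HasDerivAt (fun t => f' t + (n + 1 : ℝ) * f t)
        (f'' t + (n + 1 : ℝ) * f' t) t :=
      (hf'' t ht).add ((hf' t ht).const_mul _)
    have h3 := h1.mul h2
    refine h3.congr_deriv ?_
    linear_combination (Real.exp (-t)) * (hode t ht)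
  -- integrability
  have hmeas : AEStronglyMeasurable (fun s => g s * Real.exp (-s))
      (volume.restrict (Set.Ici (0 : ℝ))) :=
    (hg.mul (Real.continuous_exp.comp continuous_neg).continuousOn).aestronglyMeasurable
      measurableSet_Ici
  have hint : IntegrableOn (fun s => g s * Real.exp (-s)) (Set.Ici (0 : ℝ)) := by
    refine hgint.mono' hmeas ?_
    filter_upwards with s
    rw [Real.norm_eq_abs, abs_mul, abs_of_pos (Real.exp_pos _)]
  -- FTC on [0, T]
  have hFTC : ∀ T : ℝ, 0 ≤ T → ∫ s in (0 : ℝ)..T, g s * Real.exp (-s) = h T - h 0 := by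
    intro T hT
    refine intervalIntegral.integral_eq_sub_of_hasDerivAt (fun t ht => ?_) ?_
    · rw [Set.uIcc_of_le hT] at ht
      exact hderiv t ht.1
    · rw [intervalIntegrable_iff]
      refine hint.mono_set ?_
      rw [Set.uIoc_of_le hT]
      exact fun x hx => le_of_lt hx.1
  -- h tends to 0
  have hexp : Filter.Tendsto (fun t : ℝ => Real.exp (-t)) Filter.atTop (nhds 0) := by
    simpa using Real.tendsto_exp_neg_atTop_nhds_zero
  have h1lim : Filter.Tendsto (fun t => Real.exp (-t) * f' t) Filter.atTop (nhds 0) := by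
    refine squeeze_zero_norm' (a := fun t => M * Real.exp (-t)) ?_ ?_
    · filter_upwards [Filter.eventually_ge_atTop (0 : ℝ)] with t ht
      rw [Real.norm_eq_abs, abs_mul, abs_of_pos (Real.exp_pos _), mul_comm]
      exact mul_le_mul_of_nonneg_right (hM t ht) (Real.exp_pos _).le
    · simpa using hexp.const_mul M
  have h2lim : Filter.Tendsto (fun t => Real.exp (-t) * ((n + 1 : ℝ) * f t))
      Filter.atTop (nhds 0) := by
    have := hexp.mul (hlim.const_mul ((n : ℝ) + 1))
    simpa using this
  have hhlim : Filter.Tendsto h Filter.atTop (nhds 0) := by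
    have := h1lim.add h2lim
    simp only [add_zero] at this
    refine this.congr fun t => ?_
    simp [hh, mul_add]
  -- limit of interval integrals
  have hkey : Filter.Tendsto (fun T => ∫ s in (0 : ℝ)..T, g s * Real.exp (-s))
      Filter.atTop (nhds (∫ s in Set.Ici (0 : ℝ), g s * Real.exp (-s))) := by
    rw [MeasureTheory.integral_Ici_eq_integral_Ioi]
    exact MeasureTheory.intervalIntegral_tendsto_integral_Ioi 0
      (hint.mono_set Set.Ioi_subset_Ici_self) Filter.tendsto_id
  have hkey2 : Filter.Tendsto (fun T => ∫ s in (0 : ℝ)..T, g s * Real.exp (-s))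
      Filter.atTop (nhds (0 - h 0)) := by
    refine Filter.Tendsto.congr' ?_ (hhlim.sub tendsto_const_nhds)
    filter_upwards [Filter.eventually_ge_atTop (0 : ℝ)] with T hT
    exact (hFTC T hT).symm
  have hval : (∫ s in Set.Ici (0 : ℝ), g s * Real.exp (-s)) = -h 0 := by
    have := tendsto_nhds_unique hkey hkey2
    linarith
  have h0 : h 0 = f' 0 + (n + 1 : ℝ) * f 0 := by simp [hh]
  rw [hval, h0]
  constructor <;> intro hx <;> linarith
end
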